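/- Let π be a group with involution ḡ = g⁻¹ on Zπ, and suppose π is infinite with H¹(π;Zπ) = 0. Then the restriction map Hom_{Zπ}(Zπ, (Zπ)*) → Hom_{Zπ}(Iπ, (Iπ)*) is an isomorphism, and under the identification Hom_{Zπ}(Zπ,(Zπ)*) ≅ Zπ (evaluating at (1,1)) the involution f ↦ f* on pairings corresponds to the involution a ↦ ā on Zπ. In particular, every sesquilinear pairing on Iπ extends uniquely to a sesquilinear pairing on Zπ, and hermitian pairings on Iπ correspond to elements a ∈ Zπ with a = ā. -/

import Mathlib

/-- The involution of the group ring `ℤπ` induced by `g ↦ g⁻¹`. -/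
def conjGR (π : Type) [Group π] (x : MonoidAlgebra ℤ π) : MonoidAlgebra ℤ π :=
  MonoidAlgebra.ofCoeff (Finsupp.equivMapDomain (Equiv.inv π) x.coeff)

/-- A pairing `λ : M × M → ℤπ` is sesquilinear if it is biadditive,
left `ℤπ`-linear in the first variable and conjugate-linear in the second. -/
def IsSesq (π : Type) [Group π] {M : Type} [AddCommGroup M]
    [Module (MonoidAlgebra ℤ π) M] (lam : M → M → MonoidAlgebra ℤ π) : Prop :=
  (∀ x x' y, lam (x + x') y = lam x y + lam x' y) ∧
  (∀ x y y', lam x (y + y') = lam x y + lam x y') ∧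
  (∀ (a : MonoidAlgebra ℤ π) (x y), lam (a • x) y = a * lam x y) ∧
  (∀ (a : MonoidAlgebra ℤ π) (x y), lam x (a • y) = lam x y * conjGR π a)

/-- A pairing is hermitian if `λ(x,y) = conj (λ(y,x))`. -/
def IsHermitian (π : Type) [Group π] {M : Type} [AddCommGroup M]
    [Module (MonoidAlgebra ℤ π) M] (lam : M → M → MonoidAlgebra ℤ π) : Prop :=
  ∀ x y, lam x y = conjGR π (lam y x)

/-- A hermitian form is even if `λ = q + q*` for some sesquilinear `q`. -/
def IsEvenForm (π : Type) [Group π] {M : Type} [AddCommGroup M]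
    [Module (MonoidAlgebra ℤ π) M] (lam : M → M → MonoidAlgebra ℤ π) : Prop :=
  ∃ q : M → M → MonoidAlgebra ℤ π, IsSesq π q ∧
    ∀ x y, lam x y = q x y + conjGR π (q y x)

/-- The additive subgroup of `ℤπ` generated by the elements `g - g⁻¹`; the target
of quadratic refinements is the quotient `ℤπ/{g - g⁻¹}`. -/
noncomputable def oddRel (π : Type) [Group π] : AddSubgroup (MonoidAlgebra ℤ π) :=
  AddSubgroup.closure
    {x | ∃ g : π, x = MonoidAlgebra.of ℤ π g - MonoidAlgebra.of ℤ π g⁻¹}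

/-- A quadratic refinement of `λ` is a map `μ : M → ℤπ/{g - g⁻¹}` (given here by
a lift `μ : M → ℤπ`, with the relevant identities holding modulo `{g - g⁻¹}`)
such that `λ(x,x) = μ(x) + conj μ(x)`, `μ(x+y) = μ(x) + μ(y) + [λ(x,y)]` and
`μ(a·x) = a·μ(x)·conj a`. -/
def HasQuadRef (π : Type) [Group π] {M : Type} [AddCommGroup M]
    [Module (MonoidAlgebra ℤ π) M] (lam : M → M → MonoidAlgebra ℤ π) : Prop :=
  ∃ μ : M → MonoidAlgebra ℤ π,
    (∀ x, lam x x = μ x + conjGR π (μ x)) ∧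
    (∀ x y, μ (x + y) - μ x - μ y - lam x y ∈ oddRel π) ∧
    (∀ (a : MonoidAlgebra ℤ π) (x), μ (a • x) - a * μ x * conjGR π a ∈ oddRel π)

/-- The augmentation ring homomorphism `ℤπ → ℤ`. -/
noncomputable def aug (π : Type) [Group π] : MonoidAlgebra ℤ π →+* ℤ :=
  ((MonoidAlgebra.lift ℤ ℤ π) 1).toRingHom

/-- The augmentation ideal `Iπ = ker(ε : ℤπ → ℤ)`. -/
noncomputable def Ipi (π : Type) [Group π] : Ideal (MonoidAlgebra ℤ π) :=
  RingHom.ker (aug π)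

/-! ### Auxiliary lemmas -/

section Aux
variable (π : Type) [Group π]

lemma conjGR_eq (x : MonoidAlgebra ℤ π) :
    conjGR π x = MonoidAlgebra.ofCoeff (Finsupp.domCongr (M := ℤ) (Equiv.inv π) x.coeff) := rfl

lemma conjGR_add (x y : MonoidAlgebra ℤ π) :
    conjGR π (x + y) = conjGR π x + conjGR π y := by
  simp only [conjGR_eq, MonoidAlgebra.coeff_add, map_add, MonoidAlgebra.ofCoeff_add]

lemma conjGR_zero : conjGR π (0 : MonoidAlgebra ℤ π) = 0 := by
  simp only [conjGR_eq, MonoidAlgebra.coeff_zero, map_zero, MonoidAlgebra.ofCoeff_zero]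

lemma conjGR_sub (x y : MonoidAlgebra ℤ π) :
    conjGR π (x - y) = conjGR π x - conjGR π y := by
  simp only [conjGR_eq, MonoidAlgebra.coeff_sub, map_sub, MonoidAlgebra.ofCoeff_sub]

lemma conjGR_single (g : π) (n : ℤ) :
    conjGR π (MonoidAlgebra.single g n) = MonoidAlgebra.single g⁻¹ n := by
  show MonoidAlgebra.ofCoeff _ = _
  rw [MonoidAlgebra.coeff_single, Finsupp.equivMapDomain_single]
  rfl

lemma conjGR_conjGR (x : MonoidAlgebra ℤ π) : conjGR π (conjGR π x) = x := by
  induction x using MonoidAlgebra.induction_linear with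
  | zero => simp [conjGR_zero]
  | add f g hf hg => rw [conjGR_add, conjGR_add, hf, hg]
  | single a b => rw [conjGR_single, conjGR_single, inv_inv]

lemma conjGR_mul (x y : MonoidAlgebra ℤ π) :
    conjGR π (x * y) = conjGR π y * conjGR π x := by
  induction x using MonoidAlgebra.induction_linear with
  | zero => simp [conjGR_zero]
  | add f g hf hg => rw [add_mul, conjGR_add, hf, hg, conjGR_add, mul_add]
  | single a b =>
    induction y using MonoidAlgebra.induction_linear with
    | zero => simp [conjGR_zero]
    | add f g hf hg => rw [mul_add, conjGR_add, hf, hg, conjGR_add, add_mul]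
    | single c d =>
      rw [MonoidAlgebra.single_mul_single]
      rw [conjGR_single, conjGR_single, conjGR_single]
      rw [MonoidAlgebra.single_mul_single, mul_inv_rev, mul_comm d b]

lemma aug_single (g : π) (n : ℤ) : aug π (MonoidAlgebra.single g n) = n := by
  show ((MonoidAlgebra.lift ℤ ℤ π) 1) (MonoidAlgebra.single g n) = n
  rw [MonoidAlgebra.lift_single]
  simp

lemma mem_Ipi {x : MonoidAlgebra ℤ π} : x ∈ Ipi π ↔ aug π x = 0 := RingHom.mem_ker

lemma gsub_mem (g : π) : MonoidAlgebra.single g (1:ℤ) - (1 : MonoidAlgebra ℤ π) ∈ Ipi π := by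
  rw [mem_Ipi, map_sub, aug_single, map_one, sub_self]

lemma aug_conjGR (x : MonoidAlgebra ℤ π) : aug π (conjGR π x) = aug π x := by
  induction x using MonoidAlgebra.induction_linear with
  | zero => rw [conjGR_zero]
  | add f g hf hg => rw [conjGR_add, map_add, map_add, hf, hg]
  | single a b =>
    rw [conjGR_single]
    rw [aug_single, aug_single]

lemma conjGR_mem_Ipi {x : MonoidAlgebra ℤ π} (hx : x ∈ Ipi π) : conjGR π x ∈ Ipi π := by
  rw [mem_Ipi, aug_conjGR]
  exact (mem_Ipi π).1 hx

lemma eq_zero_of_Ipi_mul [Infinite π] (c : MonoidAlgebra ℤ π)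
    (h : ∀ x ∈ Ipi π, x * c = 0) : c = 0 := by
  by_contra hc
  obtain ⟨a, ha⟩ := Finsupp.support_nonempty_iff.2 (mt MonoidAlgebra.coeff_eq_zero.1 hc)
  have key : ∀ g : π, c.coeff (g⁻¹ * a) = c.coeff a := by
    intro g
    have h1 : (MonoidAlgebra.single g (1:ℤ) - 1) * c = 0 := h _ (gsub_mem π g)
    rw [sub_mul, one_mul, sub_eq_zero] at h1
    have h2 : (MonoidAlgebra.single g (1:ℤ) * c).coeff a = c.coeff a := by rw [h1]
    rwa [MonoidAlgebra.coeff_single_mul_apply, one_mul] at h2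
  have hmem : ∀ g : π, g⁻¹ * a ∈ (c.coeff.support : Set π) := by
    intro g
    simp only [Finset.mem_coe, Finsupp.mem_support_iff, key]
    exact Finsupp.mem_support_iff.1 ha
  have hinj : Function.Injective (fun g : π => g⁻¹ * a) := fun g g' hgg' => by
    simpa using inv_injective (mul_right_cancel hgg')
  exact (Set.infinite_of_injective_forall_mem hinj hmem) (c.coeff.support.finite_toSet)

lemma middle_zero [Infinite π] (b : MonoidAlgebra ℤ π)
    (h : ∀ x y : ↥(Ipi π),
      (x : MonoidAlgebra ℤ π) * b * conjGR π (y : MonoidAlgebra ℤ π) = 0) : b = 0 := by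
  have h1 : ∀ y : ↥(Ipi π), b * conjGR π (y : MonoidAlgebra ℤ π) = 0 := fun y =>
    eq_zero_of_Ipi_mul π _ (fun x hx => by
      have := h ⟨x, hx⟩ y; rwa [mul_assoc] at this)
  have h2 : ∀ z ∈ Ipi π, b * z = 0 := fun z hz => by
    have := h1 ⟨conjGR π z, conjGR_mem_Ipi π hz⟩
    rwa [conjGR_conjGR] at this
  have h3 : ∀ w ∈ Ipi π, w * conjGR π b = 0 := fun w hw => by
    have := congrArg (conjGR π) (h2 (conjGR π w) (conjGR_mem_Ipi π hw))
    rwa [conjGR_mul, conjGR_conjGR, conjGR_zero] at this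
  have h4 := eq_zero_of_Ipi_mul π (conjGR π b) h3
  have := congrArg (conjGR π) h4
  rwa [conjGR_conjGR, conjGR_zero] at this

/-- generators of the augmentation ideal as an additive group -/
def genS : Set (MonoidAlgebra ℤ π) :=
  {y | ∃ g : π, y = MonoidAlgebra.single g (1:ℤ) - 1}

lemma aug_eq_sum (x : MonoidAlgebra ℤ π) : aug π x = ∑ g ∈ x.coeff.support, x.coeff g := by
  show ((MonoidAlgebra.lift ℤ ℤ π) 1) x = _
  rw [MonoidAlgebra.lift_apply]
  simp [Finsupp.sum]

lemma mem_closure_genS {x : MonoidAlgebra ℤ π} (hx : x ∈ Ipi π) :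
    x ∈ AddSubgroup.closure (genS π) := by
  have h1 : (∑ g ∈ x.coeff.support, (x.coeff g) • (MonoidAlgebra.single g (1:ℤ))) = x := by
    have : ∀ g ∈ x.coeff.support, (x.coeff g) • (MonoidAlgebra.single g (1:ℤ)) =
        MonoidAlgebra.single g (x.coeff g) := by
      intro g _
      rw [MonoidAlgebra.smul_single, smul_eq_mul, mul_one]
    rw [Finset.sum_congr rfl this]
    exact MonoidAlgebra.sum_coeff_single x
  have hdecomp : x = ∑ g ∈ x.coeff.support, (x.coeff g) • (MonoidAlgebra.single g (1:ℤ) - 1) := by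
    have h2 : (∑ g ∈ x.coeff.support, (x.coeff g) • ((MonoidAlgebra.single g (1:ℤ)) - 1)) =
        (∑ g ∈ x.coeff.support, (x.coeff g) • (MonoidAlgebra.single g (1:ℤ)))
          - (∑ g ∈ x.coeff.support, x.coeff g) • (1 : MonoidAlgebra ℤ π) := by
      rw [Finset.sum_smul, ← Finset.sum_sub_distrib]
      exact Finset.sum_congr rfl fun g _ => by rw [smul_sub]
    rw [h2, h1, ← aug_eq_sum, (mem_Ipi π).1 hx, zero_smul, sub_zero]
  rw [hdecomp]
  exact sum_mem fun g _ =>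
    zsmul_mem (AddSubgroup.subset_closure (show _ ∈ genS π from ⟨g, rfl⟩)) _

lemma rho_eq (g : π) (v : MonoidAlgebra ℤ π) :
    (Representation.ofMulAction ℤ π π g) v = MonoidAlgebra.single g (1:ℤ) * v := by
  induction v using MonoidAlgebra.induction_linear with
  | zero => rw [map_zero, mul_zero]
  | add f g hf hg => rw [map_add, hf, hg, mul_add]
  | single a b =>
    rw [Representation.ofMulAction_single, MonoidAlgebra.single_mul_single, one_mul, smul_eq_mul]

lemma extend_hom [Infinite π]
    (hH1 : ∀ x y : groupCohomology (Rep.of (Representation.ofMulAction ℤ π π)) 1, x = y)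
    (φ : ↥(Ipi π) → MonoidAlgebra ℤ π)
    (hadd : ∀ x y, φ (x + y) = φ x + φ y)
    (hsmul : ∀ (a : MonoidAlgebra ℤ π) x, φ (a • x) = a * φ x) :
    ∃ c, ∀ x : ↥(Ipi π), φ x = (x : MonoidAlgebra ℤ π) * c := by
  have hphi0 : φ 0 = 0 := by
    have := hadd 0 0
    rwa [add_zero, left_eq_add] at this
  set A := Rep.of (Representation.ofMulAction ℤ π π) with hA
  let u : π → MonoidAlgebra ℤ π := fun g => φ ⟨MonoidAlgebra.single g (1:ℤ) - 1, gsub_mem π g⟩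
  have hu : u ∈ groupCohomology.cocycles₁ A := by
    rw [groupCohomology.mem_cocycles₁_iff]
    intro g h
    show u (g * h) = (Representation.ofMulAction ℤ π π g) (u h) + u g
    rw [rho_eq π g (u h)]
    show φ _ = MonoidAlgebra.single g (1:ℤ) * φ _ + φ _
    rw [← hsmul, ← hadd]
    congr 1
    apply Subtype.ext
    show MonoidAlgebra.single (g * h) (1:ℤ) - 1 =
      MonoidAlgebra.single g (1:ℤ) * (MonoidAlgebra.single h (1:ℤ) - 1) +
        (MonoidAlgebra.single g (1:ℤ) - 1)
    simp only [mul_sub, MonoidAlgebra.single_mul_single, mul_one, one_mul]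
    abel
  have hsub : ∀ x y : groupCohomology.H1 A, x = y := by
    intro x y
    exact hH1 x y
  have hcb : u ∈ groupCohomology.coboundaries₁ A :=
    (groupCohomology.H1π_eq_zero_iff (⟨u, hu⟩ : groupCohomology.cocycles₁ A)).1 (hsub _ _)
  obtain ⟨m0, hm⟩ := hcb
  let m0' : MonoidAlgebra ℤ π := m0
  let m : MonoidAlgebra ℤ π := m0'
  have hm' : ∀ g : π, u g = ((MonoidAlgebra.single g (1:ℤ) - 1) * m : MonoidAlgebra ℤ π) := by
    intro g
    have h : (Representation.ofMulAction ℤ π π g) m0' - m0' = u g := by rw [← hm]; rfl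
    rw [rho_eq π g m0'] at h
    rw [sub_mul, one_mul]
    exact h.symm
  refine ⟨m, fun x => ?_⟩
  have hx := mem_closure_genS π x.2
  have key : ∀ z, z ∈ AddSubgroup.closure (genS π) →
      ∃ h : z ∈ Ipi π, φ ⟨z, h⟩ = z * m := by
    intro z hz
    refine AddSubgroup.closure_induction ?_ ?_ ?_ ?_ hz
    · rintro w ⟨g, rfl⟩
      exact ⟨gsub_mem π g, hm' g⟩
    · exact ⟨zero_mem _, by rw [zero_mul]; exact hphi0⟩
    · rintro p q hp hq ⟨hp1, hp2⟩ ⟨hq1, hq2⟩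
      refine ⟨add_mem hp1 hq1, ?_⟩
      have : (⟨p + q, add_mem hp1 hq1⟩ : ↥(Ipi π)) = ⟨p, hp1⟩ + ⟨q, hq1⟩ := Subtype.ext rfl
      rw [this, hadd, hp2, hq2, add_mul]
    · rintro p hp ⟨hp1, hp2⟩
      refine ⟨neg_mem hp1, ?_⟩
      have : (⟨-p, neg_mem hp1⟩ : ↥(Ipi π)) = (-1 : MonoidAlgebra ℤ π) • ⟨p, hp1⟩ := by
        apply Subtype.ext
        show -p = (-1 : MonoidAlgebra ℤ π) • p
        rw [neg_one_smul]
      rw [this, hsmul, hp2, neg_mul, one_mul, neg_mul]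
  obtain ⟨h, e⟩ := key x.1 hx
  have hxx : (⟨x.1, h⟩ : ↥(Ipi π)) = x := Subtype.ext rfl
  rw [← hxx]
  exact e

end Aux

/-- Let `π` be an infinite group with `H¹(π; ℤπ) = 0` (coefficients in the left
regular representation).  Every sesquilinear pairing on `Iπ` extends uniquely to
a sesquilinear pairing on `ℤπ`; under the identification of pairings on `ℤπ`
with elements `a ∈ ℤπ` (via `λ(x,y) = x·a·ȳ`, i.e. evaluation at `(1,1)`), the
involution `f ↦ f*` corresponds to `a ↦ ā`, and hermitian pairings on `Iπ`
correspond exactly to the elements `a` with `ā = a`. -/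
theorem pairings_on_augmentation_ideal (π : Type) [Group π] [Infinite π]
    (hH1 : ∀ x y : groupCohomology (Rep.of (Representation.ofMulAction ℤ π π)) 1,
      x = y) :
    (∀ lam : ↥(Ipi π) → ↥(Ipi π) → MonoidAlgebra ℤ π, IsSesq π lam →
      ∃! a : MonoidAlgebra ℤ π, ∀ x y : ↥(Ipi π),
        lam x y = (x : MonoidAlgebra ℤ π) * a * conjGR π (y : MonoidAlgebra ℤ π))
    ∧ (∀ a : MonoidAlgebra ℤ π,
        IsHermitian π (fun x y : ↥(Ipi π) =>
          (x : MonoidAlgebra ℤ π) * a * conjGR π (y : MonoidAlgebra ℤ π))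
        ↔ conjGR π a = a) := by
  constructor
  · intro lam hs
    obtain ⟨h1, h2, h3, h4⟩ := hs
    have ex1 : ∀ y : ↥(Ipi π), ∃ c, ∀ x : ↥(Ipi π), lam x y = (x : MonoidAlgebra ℤ π) * c :=
      fun y => extend_hom π hH1 (fun x => lam x y) (fun x x' => h1 x x' y) (fun a x => h3 a x y)
    choose c hc using ex1
    have uniqc : ∀ (c₁ c₂ : MonoidAlgebra ℤ π),
        (∀ x : ↥(Ipi π), (x : MonoidAlgebra ℤ π) * c₁ = (x : MonoidAlgebra ℤ π) * c₂) →
        c₁ = c₂ := by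
      intro c₁ c₂ h
      have h0 : ∀ x ∈ Ipi π, x * (c₁ - c₂) = 0 := fun x hx => by
        rw [mul_sub, h ⟨x, hx⟩, sub_self]
      exact sub_eq_zero.mp (eq_zero_of_Ipi_mul π _ h0)
    have cadd : ∀ y y' : ↥(Ipi π), c (y + y') = c y + c y' := by
      intro y y'
      apply uniqc
      intro x
      calc (x : MonoidAlgebra ℤ π) * c (y + y') = lam x (y + y') := (hc _ x).symm
        _ = lam x y + lam x y' := h2 x y y'
        _ = (x : MonoidAlgebra ℤ π) * c y + (x : MonoidAlgebra ℤ π) * c y' := by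
            rw [hc, hc]
        _ = (x : MonoidAlgebra ℤ π) * (c y + c y') := (mul_add _ _ _).symm
    have csmul : ∀ (a : MonoidAlgebra ℤ π) (y : ↥(Ipi π)),
        c (a • y) = c y * conjGR π a := by
      intro a y
      apply uniqc
      intro x
      calc (x : MonoidAlgebra ℤ π) * c (a • y) = lam x (a • y) := (hc _ x).symm
        _ = lam x y * conjGR π a := h4 a x y
        _ = (x : MonoidAlgebra ℤ π) * c y * conjGR π a := by rw [hc]
        _ = (x : MonoidAlgebra ℤ π) * (c y * conjGR π a) := by rw [mul_assoc]
    obtain ⟨d, hd⟩ := extend_hom π hH1 (fun y => conjGR π (c y))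
      (fun y y' => by
        show conjGR π (c (y + y')) = conjGR π (c y) + conjGR π (c y')
        rw [cadd, conjGR_add])
      (fun a y => by
        show conjGR π (c (a • y)) = a * conjGR π (c y)
        rw [csmul, conjGR_mul, conjGR_conjGR])
    have h5 : ∀ y : ↥(Ipi π),
        c y = conjGR π d * conjGR π (y : MonoidAlgebra ℤ π) := by
      intro y
      have := congrArg (conjGR π) (hd y)
      rwa [conjGR_conjGR, conjGR_mul] at this
    have hmain : ∀ x y : ↥(Ipi π),
        lam x y = (x : MonoidAlgebra ℤ π) * conjGR π d * conjGR π (y : MonoidAlgebra ℤ π) :=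
      fun x y => by rw [hc y x, h5 y, ← mul_assoc]
    refine ⟨conjGR π d, hmain, fun a' ha' => ?_⟩
    have hz : ∀ x y : ↥(Ipi π),
        (x : MonoidAlgebra ℤ π) * (a' - conjGR π d) * conjGR π (y : MonoidAlgebra ℤ π) = 0 := by
      intro x y
      rw [mul_sub, sub_mul, sub_eq_zero]
      exact (ha' x y).symm.trans (hmain x y)
    exact sub_eq_zero.mp (middle_zero π _ hz)
  · intro a
    constructor
    · intro hH
      have hz : ∀ x y : ↥(Ipi π),
          (x : MonoidAlgebra ℤ π) * (conjGR π a - a) * conjGR π (y : MonoidAlgebra ℤ π) = 0 := by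
        intro x y
        have h : (x : MonoidAlgebra ℤ π) * a * conjGR π (y : MonoidAlgebra ℤ π) =
            conjGR π ((y : MonoidAlgebra ℤ π) * a * conjGR π (x : MonoidAlgebra ℤ π)) :=
          hH x y
        have h2 : conjGR π ((y : MonoidAlgebra ℤ π) * a * conjGR π (x : MonoidAlgebra ℤ π)) =
            (x : MonoidAlgebra ℤ π) * conjGR π a * conjGR π (y : MonoidAlgebra ℤ π) := by
          rw [conjGR_mul, conjGR_conjGR, conjGR_mul, ← mul_assoc]
        rw [h2] at h
        rw [mul_sub, sub_mul, sub_eq_zero]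
        exact h.symm
      exact sub_eq_zero.mp (middle_zero π _ hz)
    · intro ha x y
      show (x : MonoidAlgebra ℤ π) * a * conjGR π (y : MonoidAlgebra ℤ π) =
        conjGR π ((y : MonoidAlgebra ℤ π) * a * conjGR π (x : MonoidAlgebra ℤ π))
      rw [conjGR_mul, conjGR_conjGR, conjGR_mul, ← mul_assoc, ha]
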